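/- Fix α, λ ∈ ℝ with λ ≠ 0 and fix n. Let x_{n−1}, x_n, x_{n+1}, x̃_{n−1}, x̃_n, p_{n−1}, p_n ∈ ℝ satisfy, for m ∈ {n−1, n}, the relation e^{p_m} = ((e^{x̃_m − x_m} − 1)/λ) · ((1 + λ e^{x_m − x̃_{m−1}})/(1 + α e^{x_m − x̃_{m−1}})) · ((1 + α e^{x_m − x_{m−1}})/(1 + α e^{x_{m+1} − x_m})) (with all denominators nonzero). Define γ_m = e^{x̃_m − x_m}(1 + λ e^{x_m − x̃_{m−1}}) · ((1 + α e^{x_{m+1} − x̃_m})/(1 + α e^{x_{m+1} − x_m})) · ((1 + α e^{x_m − x_{m−1}})/(1 + α e^{x_m − x̃_{m−1}})). Then (1 + λ(e^{p_n} + e^{x_n − x_{n−1}}))·γ_{n−1} − λ(λ−α)·e^{x_n − x_{n−1} + p_{n−1}} = γ_{n−1}·γ_n. -/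

import Mathlib

set_option maxHeartbeats 1000000 in
/-- The covariance relation for the transfer matrix `U_n(x,p;λ)` of the
modified exponential relativistic Toda lattice: the top row acting on `(γ_{n−1},1)ᵀ`
produces `γ_{n−1}·γ_n`. -/
theorem modified_exp_transfer_covariance
    (a l : ℝ) (hl : l ≠ 0) (x xt p γ : ℤ → ℝ) (n : ℤ)
    (hγ : ∀ m : ℤ, γ m
      = Real.exp (xt m - x m) * (1 + l * Real.exp (x m - xt (m - 1)))
        * ((1 + a * Real.exp (x (m + 1) - xt m)) / (1 + a * Real.exp (x (m + 1) - x m)))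
        * ((1 + a * Real.exp (x m - x (m - 1))) / (1 + a * Real.exp (x m - xt (m - 1)))))
    (hp : ∀ m : ℤ, m = n - 1 ∨ m = n →
      Real.exp (p m)
        = ((Real.exp (xt m - x m) - 1) / l)
          * ((1 + l * Real.exp (x m - xt (m - 1))) / (1 + a * Real.exp (x m - xt (m - 1))))
          * ((1 + a * Real.exp (x m - x (m - 1))) / (1 + a * Real.exp (x (m + 1) - x m))))
    (hden1 : ∀ m : ℤ, m = n - 1 ∨ m = n → 1 + a * Real.exp (x m - xt (m - 1)) ≠ 0)
    (hden2 : ∀ m : ℤ, m = n - 1 ∨ m = n → 1 + a * Real.exp (x (m + 1) - x m) ≠ 0) :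
    (1 + l * (Real.exp (p n) + Real.exp (x n - x (n - 1)))) * γ (n - 1)
        - l * (l - a) * Real.exp (x n - x (n - 1) + p (n - 1))
      = γ (n - 1) * γ n := by
  have e1 : n - 1 - 1 = n - 2 := by ring
  have e2 : n - 1 + 1 = n := by ring
  have hg1 := hγ (n - 1)
  have hg2 := hγ n
  have hp1 := hp (n - 1) (Or.inl rfl)
  have hp2 := hp n (Or.inr rfl)
  have hd1a := hden1 (n - 1) (Or.inl rfl)
  have hd1b := hden1 n (Or.inr rfl)
  have hd2a := hden2 (n - 1) (Or.inl rfl)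
  have hd2b := hden2 n (Or.inr rfl)
  simp only [e1, e2] at hg1 hp1 hd1a hd2a
  rw [Real.exp_add]
  rw [Real.exp_sub, Real.exp_sub, Real.exp_sub, Real.exp_sub, Real.exp_sub] at hg1
  rw [Real.exp_sub, Real.exp_sub, Real.exp_sub, Real.exp_sub, Real.exp_sub] at hg2
  rw [Real.exp_sub, Real.exp_sub, Real.exp_sub, Real.exp_sub] at hp1
  rw [Real.exp_sub, Real.exp_sub, Real.exp_sub, Real.exp_sub] at hp2
  rw [Real.exp_sub] at hd1a hd1b hd2a hd2b ⊢
  set A := Real.exp (x (n - 1)) with hA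
  set B := Real.exp (x n) with hB
  set C := Real.exp (x (n + 1)) with hC
  set D := Real.exp (xt (n - 2)) with hD
  set E := Real.exp (xt (n - 1)) with hE
  set F := Real.exp (xt n) with hF
  set X := Real.exp (x (n - 2)) with hX
  have hA0 : A ≠ 0 := (Real.exp_pos _).ne'
  have hB0 : B ≠ 0 := (Real.exp_pos _).ne'
  have hC0 : C ≠ 0 := (Real.exp_pos _).ne'
  have hD0 : D ≠ 0 := (Real.exp_pos _).ne'
  have hE0 : E ≠ 0 := (Real.exp_pos _).ne'
  have hF0 : F ≠ 0 := (Real.exp_pos _).ne'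
  have hX0 : X ≠ 0 := (Real.exp_pos _).ne'
  -- cleared nonzero facts
  have hDA : D + a * A ≠ 0 := by
    intro h
    apply hd1a
    have : (1 : ℝ) + a * (A / D) = (D + a * A) / D := by field_simp
    rw [this, h, zero_div]
  have hAB : A + a * B ≠ 0 := by
    intro h
    apply hd2a
    have : (1 : ℝ) + a * (B / A) = (A + a * B) / A := by field_simp
    rw [this, h, zero_div]
  have hEB : E + a * B ≠ 0 := by
    intro h
    apply hd1b
    have : (1 : ℝ) + a * (B / E) = (E + a * B) / E := by field_simp
    rw [this, h, zero_div]
  have hBC : B + a * C ≠ 0 := by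
    intro h
    apply hd2b
    have : (1 : ℝ) + a * (C / B) = (B + a * C) / B := by field_simp
    rw [this, h, zero_div]
  -- single-fraction forms
  have hg1' : γ (n - 1)
      = (D + l * A) * (E + a * B) * (X + a * A) / ((A + a * B) * (D + a * A) * X) := by
    rw [hg1]; field_simp
  have hg2' : γ n
      = (E + l * B) * (F + a * C) * (A + a * B) / ((B + a * C) * (E + a * B) * A) := by
    rw [hg2]; field_simp
  have hp1' : Real.exp (p (n - 1))
      = (E - A) * (D + l * A) * (X + a * A) / (l * (D + a * A) * X * (A + a * B)) := by
    rw [hp1]; field_simp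
  have hp2' : Real.exp (p n)
      = (F - B) * (E + l * B) * (A + a * B) / (l * (E + a * B) * A * (B + a * C)) := by
    rw [hp2]; field_simp
  rw [hg1', hg2', hp1', hp2']
  have hEB2 : E + B * a ≠ 0 := by rwa [mul_comm] at hEB
  have hAB2 : A + B * a ≠ 0 := by rwa [mul_comm] at hAB
  have hDA2 : D + A * a ≠ 0 := by rwa [mul_comm] at hDA
  have hBC2 : B + C * a ≠ 0 := by rwa [mul_comm] at hBC
  field_simp
  ring
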